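/- Let Γ be a finite collection of at least two finite sets, all of cardinality α > 0, such that Γ−{S} is an hke collection for every S ∈ Γ. If there exists one partition {Γ₁,Γ₂} of Γ into two non-empty subcollections with |⋂Γ₁ − ⋃Γ₂| = |⋂Γ₂ − ⋃Γ₁|, then Γ is an hke collection. -/
import Mathlib

open Finset

/-- Union of a finite collection of finite sets. -/
def collU {α : Type*} [DecidableEq α] (Γ : Finset (Finset α)) : Finset α :=
  Γ.sup id

/-- Intersection of a finite collection of finite sets
(equals the usual intersection when the collection is non-empty). -/
def collI {α : Type*} [DecidableEq α] (Γ : Finset (Finset α)) : Finset α :=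
  (Γ.sup id).filter (fun x => ∀ S ∈ Γ, x ∈ S)

/-- `e Γ = |⋃Γ| + |⋂Γ|` as an integer. -/
def collE {α : Type*} [DecidableEq α] (Γ : Finset (Finset α)) : ℤ :=
  (collU Γ).card + (collI Γ).card

/-- `F` is a hereditary König–Egerváry collection with common cardinality `a`. -/
def IsHKE {α : Type*} [DecidableEq α] (F : Finset (Finset α)) (a : ℕ) : Prop :=
  (∀ S ∈ F, S.card = a) ∧
  ∀ Γ ⊆ F, Γ.Nonempty → collE Γ = 2 * (a : ℤ)

section Aux
variable {α : Type*} [DecidableEq α]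

/-- The defect of a partition. -/
def Dd (A B : Finset (Finset α)) : ℤ :=
  ((collI A \ collU B).card : ℤ) - ((collI B \ collU A).card : ℤ)

lemma collU_union (A B : Finset (Finset α)) : collU (A ∪ B) = collU A ∪ collU B := by
  simp [collU, Finset.sup_union]

lemma mem_collI_of_nonempty {Γ : Finset (Finset α)} (h : Γ.Nonempty) {x : α} :
    x ∈ collI Γ ↔ ∀ S ∈ Γ, x ∈ S := by
  unfold collI
  simp only [Finset.mem_filter]
  constructor
  · exact fun h' => h'.2
  · intro hx
    obtain ⟨S, hS⟩ := h
    exact ⟨Finset.mem_sup.2 ⟨S, hS, hx S hS⟩, hx⟩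

lemma collI_union {A B : Finset (Finset α)} (hA : A.Nonempty) (hB : B.Nonempty) :
    collI (A ∪ B) = collI A ∩ collI B := by
  ext x
  rw [mem_collI_of_nonempty (hA.mono Finset.subset_union_left), Finset.mem_inter,
    mem_collI_of_nonempty hA, mem_collI_of_nonempty hB]
  simp only [Finset.mem_union]
  constructor
  · exact fun h => ⟨fun S hS => h S (Or.inl hS), fun S hS => h S (Or.inr hS)⟩
  · rintro ⟨h1, h2⟩ S (hS | hS)
    · exact h1 S hS
    · exact h2 S hS

lemma collU_singleton (S : Finset α) : collU ({S} : Finset (Finset α)) = S := by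
  simp [collU]

lemma collI_singleton (S : Finset α) : collI ({S} : Finset (Finset α)) = S := by
  ext x
  rw [mem_collI_of_nonempty (Finset.singleton_nonempty S)]
  simp

lemma collE_union {A B : Finset (Finset α)} (hA : A.Nonempty) (hB : B.Nonempty) :
    collE (A ∪ B) = collE A + collE B - ((collU A ∩ collU B).card : ℤ)
      - ((collI A ∪ collI B).card : ℤ) := by
  have h1 := Finset.card_union_add_card_inter (collU A) (collU B)
  have h2 := Finset.card_union_add_card_inter (collI A) (collI B)
  unfold collE
  rw [collU_union, collI_union hA hB]
  push_cast at h1 h2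
  linarith

lemma sub_hke {F G : Finset (Finset α)} {a : ℕ} (h : IsHKE F a) (hG : G ⊆ F) :
    IsHKE G a :=
  ⟨fun S hS => h.1 S (hG hS), fun Γ' hΓ' => h.2 Γ' (hΓ'.trans hG)⟩

lemma D_singleton {a : ℕ} {S : Finset α} {B : Finset (Finset α)} (hB : B.Nonempty)
    (hS : S.card = a) (hBe : collE B = 2 * (a : ℤ)) :
    Dd {S} B = collE ({S} ∪ B) - 2 * (a : ℤ) := by
  have hu := collE_union (Finset.singleton_nonempty S) hB
  rw [collU_singleton, collI_singleton] at hu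
  have hES : collE ({S} : Finset (Finset α)) = 2 * (a : ℤ) := by
    unfold collE
    rw [collU_singleton, collI_singleton, hS]; ring
  have h1 : (S \ collU B).card + (S ∩ collU B).card = S.card :=
    Finset.card_sdiff_add_card_inter S (collU B)
  have h2 : (collI B \ S).card + (collI B ∩ S).card = (collI B).card :=
    Finset.card_sdiff_add_card_inter (collI B) S
  have h3 : (S ∪ collI B).card + (S ∩ collI B).card = S.card + (collI B).card :=
    Finset.card_union_add_card_inter S (collI B)
  have h4 : (S ∩ collI B).card = (collI B ∩ S).card := by rw [Finset.inter_comm]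
  have hBe' : ((collU B).card : ℤ) + ((collI B).card : ℤ) = 2 * (a : ℤ) := hBe
  unfold Dd
  rw [collI_singleton, collU_singleton, hu, hES, hBe]
  push_cast at h1 h2 h3 h4 ⊢
  rw [hS] at h1 h3
  linarith

lemma D_flip {S : Finset α} {A B : Finset (Finset α)} (hA : A.Nonempty) (hB : B.Nonempty) :
    Dd (insert S A) B + Dd A (insert S B) = Dd A B := by
  have hIA : collI (insert S A) = S ∩ collI A := by
    rw [Finset.insert_eq, collI_union (Finset.singleton_nonempty S) hA, collI_singleton]
  have hIB : collI (insert S B) = S ∩ collI B := by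
    rw [Finset.insert_eq, collI_union (Finset.singleton_nonempty S) hB, collI_singleton]
  have hUA : collU (insert S A) = S ∪ collU A := by
    rw [Finset.insert_eq, collU_union, collU_singleton]
  have hUB : collU (insert S B) = S ∪ collU B := by
    rw [Finset.insert_eq, collU_union, collU_singleton]
  have e1 : (S ∩ collI A) \ collU B = (collI A \ collU B) ∩ S := by
    ext x; simp only [Finset.mem_sdiff, Finset.mem_inter]; tauto
  have e2 : collI A \ (S ∪ collU B) = (collI A \ collU B) \ S := by
    ext x; simp only [Finset.mem_sdiff, Finset.mem_union]; tauto
  have e3 : (S ∩ collI B) \ collU A = (collI B \ collU A) ∩ S := by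
    ext x; simp only [Finset.mem_sdiff, Finset.mem_inter]; tauto
  have e4 : collI B \ (S ∪ collU A) = (collI B \ collU A) \ S := by
    ext x; simp only [Finset.mem_sdiff, Finset.mem_union]; tauto
  have c1 : ((collI A \ collU B) ∩ S).card + ((collI A \ collU B) \ S).card
      = (collI A \ collU B).card := Finset.card_inter_add_card_sdiff _ _
  have c2 : ((collI B \ collU A) ∩ S).card + ((collI B \ collU A) \ S).card
      = (collI B \ collU A).card := Finset.card_inter_add_card_sdiff _ _
  unfold Dd
  rw [hIA, hIB, hUA, hUB, e1, e2, e3, e4]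
  push_cast at c1 c2 ⊢
  linarith

lemma erase_nonempty_of_ne_singleton {A : Finset (Finset α)} {S : Finset α}
    (hS : S ∈ A) (hne : A ≠ {S}) : (A.erase S).Nonempty := by
  rw [Finset.nonempty_iff_ne_empty]
  intro h
  apply hne
  apply Finset.eq_singleton_iff_unique_mem.2
  refine ⟨hS, fun x hx => ?_⟩
  by_contra hxs
  exact absurd (Finset.mem_erase.2 ⟨hxs, hx⟩) (by simp [h])

lemma union_erase_insert {A B : Finset (Finset α)} {S : Finset α} (hS : S ∈ A) :
    A.erase S ∪ insert S B = A ∪ B := by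
  ext x
  simp only [Finset.mem_union, Finset.mem_erase, Finset.mem_insert]
  constructor
  · rintro (⟨_, h⟩ | h | h)
    · exact Or.inl h
    · exact Or.inl (h ▸ hS)
    · exact Or.inr h
  · rintro (h | h)
    · by_cases hx : x = S
      · exact Or.inr (Or.inl hx)
      · exact Or.inl ⟨hx, h⟩
    · exact Or.inr (Or.inr h)

/-- In an hke collection, every two-block partition has zero defect. -/
lemma lemZ (a : ℕ) : ∀ n : ℕ, ∀ A B : Finset (Finset α), A.card ≤ n → A.Nonempty →
    B.Nonempty → Disjoint A B → IsHKE (A ∪ B) a → Dd A B = 0 := by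
  intro n
  induction n with
  | zero =>
    intro A B hc hA _ _ _
    exact absurd (Finset.card_pos.2 hA) (by omega)
  | succ n ih =>
    intro A B hc hA hB hdisj hF
    obtain ⟨S, hS⟩ := hA
    by_cases h1 : A = {S}
    · subst h1
      have hSa : S.card = a := hF.1 S (Finset.mem_union_left _ (Finset.mem_singleton_self S))
      have hBe : collE B = 2 * (a : ℤ) := hF.2 B Finset.subset_union_right hB
      have hFull : collE ({S} ∪ B) = 2 * (a : ℤ) :=
        hF.2 _ (Finset.Subset.refl _) ((Finset.singleton_nonempty S).mono Finset.subset_union_left)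
      rw [D_singleton hB hSa hBe, hFull]; ring
    · have hA' : (A.erase S).Nonempty := erase_nonempty_of_ne_singleton hS h1
      have hins : insert S (A.erase S) = A := Finset.insert_erase hS
      have hflip := D_flip (S := S) hA' hB
      rw [hins] at hflip
      have hcard' : (A.erase S).card ≤ n := by
        have := Finset.card_erase_of_mem hS
        omega
      have hz1 : Dd (A.erase S) B = 0 := by
        refine ih (A.erase S) B hcard' hA' hB
          (Finset.disjoint_of_subset_left (Finset.erase_subset S A) hdisj)
          (sub_hke hF (Finset.union_subset_union (Finset.erase_subset S A)
            (Finset.Subset.refl B)))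
      have hz2 : Dd (A.erase S) (insert S B) = 0 := by
        refine ih (A.erase S) (insert S B) hcard' hA' ⟨S, Finset.mem_insert_self S B⟩ ?_ ?_
        · rw [Finset.disjoint_insert_right]
          exact ⟨Finset.notMem_erase S A,
            Finset.disjoint_of_subset_left (Finset.erase_subset S A) hdisj⟩
        · rw [union_erase_insert hS]
          exact hF
      linarith

/-- Main induction: if every proper nonempty subcollection is hke,
then the defect of every partition equals `±(collE Γ - 2a)`. -/
lemma lemMain (a : ℕ) (Γ : Finset (Finset α))
    (hprop : ∀ Γ' ⊆ Γ, Γ' ≠ Γ → Γ'.Nonempty → collE Γ' = 2 * (a : ℤ))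
    (hsize : ∀ S ∈ Γ, S.card = a) :
    ∀ n : ℕ, ∀ A B : Finset (Finset α), A.card ≤ n → A ∪ B = Γ → Disjoint A B →
      A.Nonempty → B.Nonempty →
      Dd A B = collE Γ - 2 * (a : ℤ) ∨ Dd A B = -(collE Γ - 2 * (a : ℤ)) := by
  intro n
  induction n with
  | zero =>
    intro A B hc _ _ hA _
    exact absurd (Finset.card_pos.2 hA) (by omega)
  | succ n ih =>
    intro A B hc hun hdisj hA hB
    obtain ⟨S, hS⟩ := hA
    have hSΓ : S ∈ Γ := hun ▸ Finset.mem_union_left _ hS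
    by_cases h1 : A = {S}
    · subst h1
      have hSB : S ∉ B := Finset.disjoint_left.1 hdisj (Finset.mem_singleton_self S)
      have hBne : B ≠ Γ := fun h => hSB (h ▸ hSΓ)
      have hBe : collE B = 2 * (a : ℤ) :=
        hprop B (hun ▸ Finset.subset_union_right) hBne hB
      left
      rw [D_singleton hB (hsize S hSΓ) hBe, hun]
    · have hA' : (A.erase S).Nonempty := erase_nonempty_of_ne_singleton hS h1
      have hins : insert S (A.erase S) = A := Finset.insert_erase hS
      have hflip := D_flip (S := S) hA' hB
      rw [hins] at hflip
      have hcard' : (A.erase S).card ≤ n := by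
        have := Finset.card_erase_of_mem hS
        omega
      -- the restricted collection Γ.erase S is hke
      have hhkeE : IsHKE (A.erase S ∪ B) a := by
        constructor
        · intro T hT
          apply hsize
          rw [← hun]
          rcases Finset.mem_union.1 hT with h | h
          · exact Finset.mem_union_left _ (Finset.erase_subset S A h)
          · exact Finset.mem_union_right _ h
        · intro Γ'' hsub hne
          refine hprop Γ'' ?_ ?_ hne
          · intro x hx
            rw [← hun]
            rcases Finset.mem_union.1 (hsub hx) with h | h
            · exact Finset.mem_union_left _ (Finset.erase_subset S A h)
            · exact Finset.mem_union_right _ h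
          · intro h
            have hSin : S ∈ Γ'' := h ▸ hSΓ
            rcases Finset.mem_union.1 (hsub hSin) with h' | h'
            · exact Finset.notMem_erase S A h'
            · exact Finset.disjoint_left.1 hdisj hS h'
      have hz1 : Dd (A.erase S) B = 0 :=
        lemZ a (A.erase S).card (A.erase S) B le_rfl hA' hB
          (Finset.disjoint_of_subset_left (Finset.erase_subset S A) hdisj) hhkeE
      have hz2 : Dd (A.erase S) (insert S B) = collE Γ - 2 * (a : ℤ) ∨
          Dd (A.erase S) (insert S B) = -(collE Γ - 2 * (a : ℤ)) := by
        refine ih (A.erase S) (insert S B) hcard' ?_ ?_ hA' ⟨S, Finset.mem_insert_self S B⟩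
        · rw [union_erase_insert hS]; exact hun
        · rw [Finset.disjoint_insert_right]
          exact ⟨Finset.notMem_erase S A,
            Finset.disjoint_of_subset_left (Finset.erase_subset S A) hdisj⟩
      rcases hz2 with h | h
      · right; linarith
      · left; linarith

end Aux

theorem stmt_17 {α : Type*} [DecidableEq α] (Γ : Finset (Finset α))
    (hcard : 2 ≤ Γ.card) (a : ℕ) (ha : 0 < a)
    (hsize : ∀ S ∈ Γ, S.card = a)
    (hhke : ∀ S ∈ Γ, IsHKE (Γ.erase S) a)
    (hpart : ∃ Γ₁ Γ₂ : Finset (Finset α),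
      Γ₁ ∪ Γ₂ = Γ ∧ Disjoint Γ₁ Γ₂ ∧ Γ₁.Nonempty ∧ Γ₂.Nonempty ∧
      (collI Γ₁ \ collU Γ₂).card = (collI Γ₂ \ collU Γ₁).card) :
    IsHKE Γ a := by
  obtain ⟨Γ₁, Γ₂, hun, hdis, h1, h2, heq⟩ := hpart
  have hprop : ∀ Γ' ⊆ Γ, Γ' ≠ Γ → Γ'.Nonempty → collE Γ' = 2 * (a : ℤ) := by
    intro Γ' hsub hne hΓ'
    obtain ⟨S, hSΓ, hSΓ'⟩ := Finset.exists_of_ssubset (lt_of_le_of_ne hsub hne)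
    refine (hhke S hSΓ).2 Γ' ?_ hΓ'
    intro x hx
    exact Finset.mem_erase.2 ⟨fun h => hSΓ' (h ▸ hx), hsub hx⟩
  have hD : Dd Γ₁ Γ₂ = 0 := by
    unfold Dd
    rw [heq]; ring
  have hE : collE Γ = 2 * (a : ℤ) := by
    rcases lemMain a Γ hprop hsize Γ₁.card Γ₁ Γ₂ le_rfl hun hdis h1 h2 with h | h <;>
      rw [hD] at h <;> linarith
  refine ⟨hsize, fun Γ' hsub hΓ' => ?_⟩
  by_cases h : Γ' = Γ
  · rw [h]; exact hE
  · exact hprop Γ' hsub h hΓ'
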